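/- Let C be a non-degenerate [n,k]_{q^m/q} code such that C^⊥ is non-degenerate. Let G be any generator matrix of C and let U_C be the 𝔽_q-span of the columns of G. Then the map φ : 𝔽_{q^m}^n/C^⊥ → 𝔽_{q^m}^k sending x + C^⊥ to xG^⊤ is a well-defined 𝔽_{q^m}-linear isomorphism, and φ maps the 𝔽_q-subspace (𝔽_q^n + C^⊥)/C^⊥ onto U_C. -/

import Mathlib

/-- The standard dot-product bilinear form on `ι → L`. -/
noncomputable def dotForm (L : Type*) [Field L] (ι : Type*) [Fintype ι] :
    (ι → L) →ₗ[L] (ι → L) →ₗ[L] L :=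
  LinearMap.mk₂ L (fun x y => ∑ i, x i * y i)
    (fun x x' y => by simp [add_mul, Finset.sum_add_distrib])
    (fun c x y => by simp [Finset.mul_sum, mul_assoc])
    (fun x y y' => by simp [mul_add, Finset.sum_add_distrib])
    (fun c x y => by simp [Finset.mul_sum, mul_left_comm])

/-- The rank weight of a vector `v ∈ 𝔽_{q^m}^ι`. -/
noncomputable def rankWt (K : Type*) {L ι : Type*} [Field K] [Field L] [Algebra K L]
    (v : ι → L) : ℕ :=
  Module.finrank K ↥(Submodule.span K (Set.range v))


open Matrix

/-- Theorem 2.10: identification of the system `U_C` with `(𝔽_q^n + C^⊥)/C^⊥`. -/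
theorem statement15 {K L : Type*} [Field K] [Field L] [Algebra K L]
    [Fintype K] [Fintype L]
    (m n k : ℕ) (hm : 0 < m) (hmL : Module.finrank K L = m)
    (hk : 0 < k) (hkn : k ≤ n)
    -- `C` is an `[n,k]_{q^m/q}` code with generator matrix `G`
    (C : Submodule L (Fin n → L)) (hCdim : Module.finrank L ↥C = k)
    (G : Matrix (Fin k) (Fin n) L)
    (hG : LinearMap.range (Matrix.vecMulLinear G) = C)
    -- the dual code `C^⊥`
    (Cperp : Submodule L (Fin n → L))
    (hCperp : Cperp = LinearMap.BilinForm.orthogonal (dotForm L (Fin n)) C)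
    -- `C` is non-degenerate: the columns of `G` are `𝔽_q`-linearly independent
    (hCnd : LinearIndependent K (fun j : Fin n => fun i : Fin k => G i j))
    -- `C^⊥` is non-degenerate
    (hCperpnd : ∀ z : Fin n → K,
      (∀ c ∈ Cperp, ∑ i, algebraMap K L (z i) * c i = 0) → z = 0)
    -- the associated system: the `𝔽_q`-span of the columns of `G`
    (UC : Submodule K (Fin k → L))
    (hUC : UC = Submodule.span K (Set.range (fun j : Fin n => fun i : Fin k => G i j)))
    -- `𝔽_q^n`: the vectors of `𝔽_{q^m}^n` with all coordinates in `𝔽_q`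
    (Fqn : Submodule K (Fin n → L))
    (hFqn : Fqn = Submodule.pi Set.univ (fun _ : Fin n => LinearMap.range (Algebra.linearMap K L))) :
    ∃ φ : ((Fin n → L) ⧸ Cperp) ≃ₗ[L] (Fin k → L),
      (∀ x : Fin n → L, φ (Submodule.Quotient.mk x) = Matrix.mulVec G x) ∧
      Submodule.map (φ.toLinearMap.restrictScalars K)
        (Submodule.map (Cperp.mkQ.restrictScalars K) Fqn) = UC := by
  classical
  set f : (Fin n → L) →ₗ[L] (Fin k → L) := Matrix.mulVecLin G with hf
  -- kernel of f is Cperp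
  have hker : LinearMap.ker f = Cperp := by
    ext x
    simp only [LinearMap.mem_ker, hCperp, LinearMap.BilinForm.mem_orthogonal_iff]
    constructor
    · intro hfx c hc
      rw [← hG] at hc
      obtain ⟨y, rfl⟩ := hc
      show (dotForm L (Fin n)) _ x = 0
      simp only [dotForm, LinearMap.mk₂_apply, Matrix.vecMulLinear_apply]
      have : ∑ j, (y ᵥ* G) j * x j = ∑ i, y i * (G *ᵥ x) i := by
        simp [Matrix.vecMul, Matrix.mulVec, dotProduct, Finset.mul_sum,
          Finset.sum_mul, mul_assoc]
        rw [Finset.sum_comm]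
      rw [this]
      have : G *ᵥ x = 0 := hfx
      simp [this]
    · intro h
      funext i
      have := h (Matrix.vecMulLinear G (Pi.single i 1)) (by rw [← hG]; exact ⟨_, rfl⟩)
      simp only [dotForm, LinearMap.mk₂_apply, Matrix.vecMulLinear_apply] at this
      have h2 : ∑ j, (Pi.single i 1 ᵥ* G) j * x j = (G *ᵥ x) i := by
        simp [Matrix.vecMul, Matrix.mulVec, dotProduct, Pi.single_apply,
          Finset.sum_mul]
      rw [h2] at this
      simpa [f] using this
  -- surjectivity of f
  have hrange : LinearMap.range f = ⊤ := by
    have h1 : Module.finrank L ↥(LinearMap.range f) = k := by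
      have : Module.finrank L ↥(LinearMap.range f) = G.rank := rfl
      rw [this, ← Matrix.rank_transpose, Matrix.rank, Matrix.mulVecLin_transpose, hG, hCdim]
    apply Submodule.eq_top_of_finrank_eq
    rw [h1, Module.finrank_pi]
    simp
  set ψ : ((Fin n → L) ⧸ Cperp) →ₗ[L] (Fin k → L) := Cperp.liftQ f hker.ge with hψ
  have hψ_apply : ∀ x, ψ (Submodule.Quotient.mk x) = G *ᵥ x := fun x => rfl
  have hbij : Function.Bijective ψ := by
    constructor
    · rw [← LinearMap.ker_eq_bot, Submodule.ker_liftQ_eq_bot _ _ _ hker.le]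
    · rw [← LinearMap.range_eq_top, Submodule.range_liftQ, hrange]
  refine ⟨LinearEquiv.ofBijective ψ hbij, fun x => rfl, ?_⟩
  have hcomp : ((LinearEquiv.ofBijective ψ hbij).toLinearMap.restrictScalars K).comp
      (Cperp.mkQ.restrictScalars K) = f.restrictScalars K := by
    ext x; rfl
  rw [← Submodule.map_comp, hcomp]
  -- now show map (f.restrictScalars K) Fqn = UC
  apply le_antisymm
  · rintro _ ⟨x, hx, rfl⟩
    simp only [hFqn, SetLike.mem_coe, Submodule.mem_pi] at hx
    choose z hz using fun j => hx j (Set.mem_univ j)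
    have hxz : x = fun j => algebraMap K L (z j) := by
      funext j; exact (hz j).symm
    rw [hUC]
    have : (f.restrictScalars K) x = ∑ j, z j • (fun i => G i j) := by
      subst hxz
      funext i
      simp [f, Matrix.mulVecLin, Matrix.mulVec, dotProduct, Algebra.smul_def,
        mul_comm]
    rw [this]
    exact Submodule.sum_mem _ fun j _ =>
      Submodule.smul_mem _ _ (Submodule.subset_span ⟨j, rfl⟩)
  · rw [hUC, Submodule.span_le]
    rintro _ ⟨j, rfl⟩
    refine ⟨Pi.single j 1, ?_, ?_⟩
    · simp only [hFqn, SetLike.mem_coe, Submodule.mem_pi]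
      intro i _
      by_cases h : i = j
      · subst h; exact ⟨1, by simp⟩
      · exact ⟨0, by simp [Pi.single_apply, h]⟩
    · funext i
      simp [f, Matrix.mulVecLin, Matrix.mulVec, dotProduct, Pi.single_apply]
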